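/- arXiv:1401.1553 — 2 statements merged into one kernel-verified Lean document; each statement's English description precedes it below -/
import Mathlib

section
/- The Dickman function ρ is strictly positive: ρ(u) > 0 for all u ≥ 0. -/
open Set intervalIntegral

theorem dickman_pos (ρ : ℝ → ℝ)
    (hcont : ContinuousOn ρ (Ici 0))
    (hinit : ∀ u ∈ Icc (0:ℝ) 1, ρ u = 1)
    (hrec : ∀ u v : ℝ, 0 ≤ u - 1 → u - 1 ≤ v → v ≤ u →
      ρ u = ρ v - ∫ t in v..u, ρ (t - 1) / t) :
    ∀ u : ℝ, 0 ≤ u → 0 < ρ u := by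
  by_contra h
  push_neg at h
  obtain ⟨u₀, hu₀, hρu₀⟩ := h
  classical
  -- Extend ρ continuously to all of ℝ
  set P : ℝ → ℝ := fun t => ρ (max t 0) with hPdef
  have hPcont : Continuous P :=
    hcont.comp_continuous (continuous_id.max continuous_const) fun x => le_max_right x 0
  have hPeq : ∀ t : ℝ, 0 ≤ t → P t = ρ t := fun t ht => by
    simp only [hPdef, max_eq_left ht]
  -- The set where ρ is nonpositive
  set S : Set ℝ := Ici 0 ∩ P ⁻¹' Iic 0 with hSdef
  have hmemS : ∀ x : ℝ, x ∈ S ↔ 0 ≤ x ∧ ρ x ≤ 0 := by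
    intro x
    constructor
    · rintro ⟨hx0, hx1⟩
      exact ⟨hx0, by rwa [← hPeq x hx0]⟩
    · rintro ⟨hx0, hx1⟩
      exact ⟨hx0, by simpa [Set.mem_preimage, hPeq x hx0] using hx1⟩
  have hSne : S.Nonempty := ⟨u₀, (hmemS u₀).2 ⟨hu₀, hρu₀⟩⟩
  have hSbdd : BddBelow S := ⟨0, fun x hx => hx.1⟩
  have hSclosed : IsClosed S :=
    isClosed_Ici.inter (isClosed_Iic.preimage hPcont)
  set c : ℝ := sInf S with hcdef
  have hcS : c ∈ S := hSclosed.csInf_mem hSne hSbdd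
  have hc0 : 0 ≤ c := hcS.1
  have hρc : ρ c ≤ 0 := ((hmemS c).1 hcS).2
  have hc1 : 1 < c := by
    by_contra hcle
    push_neg at hcle
    have := hinit c ⟨hc0, hcle⟩
    linarith
  have hpos : ∀ u : ℝ, 0 ≤ u → u < c → 0 < ρ u := by
    intro u hu huc
    by_contra hle
    push_neg at hle
    have : u ∈ S := (hmemS u).2 ⟨hu, hle⟩
    exact absurd (csInf_le hSbdd this) (not_le.2 huc)
  -- The derivative of ρ on (1, ∞)
  have hderiv : ∀ u : ℝ, 1 < u → HasDerivAt ρ (-(ρ (u - 1) / u)) u := by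
    intro u hu
    set v : ℝ := u - min (1/2) ((u - 1)/2) with hvdef
    have hmin_pos : 0 < min (1/2) ((u - 1)/2) := by
      refine lt_min (by norm_num) (by linarith)
    have hmin_le : min (1/2) ((u - 1)/2) ≤ (u - 1)/2 := min_le_right _ _
    have hmin_le' : min (1/2) ((u - 1)/2) ≤ 1/2 := min_le_left _ _
    have hv1 : 1 < v := by
      simp only [hvdef]; linarith
    have hvu : v < u := by simp only [hvdef]; linarith
    have huv1 : u < v + 1 := by simp only [hvdef]; linarith
    set f : ℝ → ℝ := fun t => P (t - 1) / t with hfdef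
    have hfcont : ContinuousOn f (Ioi 0) := by
      apply ContinuousOn.div
      · exact (hPcont.comp (continuous_sub_right 1)).continuousOn
      · exact continuousOn_id
      · exact fun x hx => ne_of_gt hx
    have hsub : Set.uIcc v u ⊆ Ioi 0 := by
      rw [uIcc_of_le hvu.le]
      intro t ht
      exact lt_of_lt_of_le (by linarith : (0:ℝ) < v) ht.1
    have hInt : IntervalIntegrable f MeasureTheory.volume v u :=
      (hfcont.mono hsub).intervalIntegrable
    have hmeas : StronglyMeasurableAtFilter f (nhds u) MeasureTheory.volume :=
      hfcont.stronglyMeasurableAtFilter isOpen_Ioi u (by positivity : (0:ℝ) < u)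
    have hctsAt : ContinuousAt f u :=
      hfcont.continuousAt (Ioi_mem_nhds (by positivity : (0:ℝ) < u))
    have hFTC : HasDerivAt (fun x => ∫ t in v..x, f t) (f u) u :=
      intervalIntegral.integral_hasDerivAt_right hInt hmeas hctsAt
    have hD : HasDerivAt (fun x => ρ v - ∫ t in v..x, f t) (0 - f u) u :=
      (hasDerivAt_const u (ρ v)).sub hFTC
    have hkey : ∀ x ∈ Ioo v (v + 1), ρ x = ρ v - ∫ t in v..x, f t := by
      intro x hx
      have h1 : 0 ≤ x - 1 := by have := hx.1; linarith
      have h2 : x - 1 ≤ v := by have := hx.2; linarith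
      rw [hrec x v h1 h2 hx.1.le]
      congr 1
      apply intervalIntegral.integral_congr
      intro t ht
      rw [Set.uIcc_of_le hx.1.le] at ht
      have h3 : (0:ℝ) ≤ t - 1 := by have := ht.1; linarith
      simp only [hfdef, hPeq _ h3]
    have hEq : ρ =ᶠ[nhds u] fun x => ρ v - ∫ t in v..x, f t :=
      Filter.eventuallyEq_of_mem (Ioo_mem_nhds hvu huv1) hkey
    have hfu : f u = ρ (u - 1) / u := by
      simp only [hfdef, hPeq _ (by linarith : (0:ℝ) ≤ u - 1)]
    have := hD.congr_of_eventuallyEq hEq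
    rw [zero_sub, hfu] at this
    exact this
  -- The primitive of P
  set Φ : ℝ → ℝ := fun b => ∫ t in (0:ℝ)..b, P t with hΦdef
  have hΦderiv : ∀ b : ℝ, HasDerivAt Φ (P b) b := by
    intro b
    exact intervalIntegral.integral_hasDerivAt_right
      (hPcont.intervalIntegrable 0 b)
      (hPcont.stronglyMeasurable.stronglyMeasurableAtFilter)
      hPcont.continuousAt
  have hΦcont : Continuous Φ := by
    have : Differentiable ℝ Φ := fun b => (hΦderiv b).differentiableAt
    exact this.continuous
  -- G u := u * ρ u - (Φ u - Φ (u - 1)) is constant on (1, ∞)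
  set G : ℝ → ℝ := fun u => u * ρ u - (Φ u - Φ (u - 1)) with hGdef
  have hGderiv : ∀ u : ℝ, 1 < u → HasDerivAt G 0 u := by
    intro u hu
    have h1 : HasDerivAt (fun x => x * ρ x)
        (1 * ρ u + u * -(ρ (u - 1) / u)) u :=
      (hasDerivAt_id u).mul (hderiv u hu)
    have h2 : HasDerivAt (fun x : ℝ => Φ (x - 1)) (P (u - 1) * 1) u :=
      ((hΦderiv (u - 1)).comp u ((hasDerivAt_id u).sub_const 1) :)
    have h3 : HasDerivAt G
        (1 * ρ u + u * -(ρ (u - 1) / u) - (P u - P (u - 1) * 1)) u :=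
      h1.sub ((hΦderiv u).sub h2)
    have hu0 : u ≠ 0 := by linarith
    have heq : 1 * ρ u + u * -(ρ (u - 1) / u) - (P u - P (u - 1) * 1) = 0 := by
      rw [hPeq u (by linarith), hPeq (u - 1) (by linarith)]
      field_simp
      ring
    rwa [heq] at h3
  -- G is continuous on Ici 0
  have hGcont : ContinuousOn G (Ici 0) := by
    apply ContinuousOn.sub
    · exact continuousOn_id.mul hcont
    · exact (hΦcont.sub (hΦcont.comp (continuous_sub_right 1))).continuousOn
  -- G is constant on (1, c]
  have hGconst : ∀ a ∈ Ioo (1:ℝ) c, G c = G a := by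
    intro a ha
    have hcc : ContinuousOn G (Icc a c) :=
      hGcont.mono (fun x hx => le_trans (by linarith [ha.1] : (0:ℝ) ≤ a) hx.1)
    have := constant_of_has_deriv_right_zero hcc
      (fun x hx => (hGderiv x (lt_of_lt_of_le ha.1 hx.1)).hasDerivWithinAt)
    exact this c ⟨ha.2.le, le_refl c⟩
  -- Take the limit a → 1⁺ to get G c = G 1
  have hG1 : G c = G 1 := by
    have hne : (nhdsWithin 1 (Ioo (1:ℝ) c)).NeBot := by
      apply mem_closure_iff_nhdsWithin_neBot.1
      rw [closure_Ioo (by linarith : (1:ℝ) ≠ c)]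
      exact ⟨le_refl 1, hc1.le⟩
    have htend1 : Filter.Tendsto G (nhdsWithin 1 (Ioo (1:ℝ) c)) (nhds (G 1)) :=
      (hGcont 1 (by norm_num)).mono_left
        (nhdsWithin_mono 1 (fun x hx => le_trans (by norm_num : (0:ℝ) ≤ 1) hx.1.le))
    have htend2 : Filter.Tendsto G (nhdsWithin 1 (Ioo (1:ℝ) c)) (nhds (G c)) := by
      refine Filter.Tendsto.congr' ?_ tendsto_const_nhds
      exact Filter.eventuallyEq_of_mem self_mem_nhdsWithin (fun a ha => hGconst a ha)
    exact (tendsto_nhds_unique htend1 htend2).symm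
  -- Compute G 1 = 0
  have hΦ01 : Φ 1 = 1 := by
    have hall : ∀ t ∈ Set.uIcc (0:ℝ) 1, P t = 1 := by
      intro t ht
      rw [uIcc_of_le (by norm_num : (0:ℝ) ≤ 1)] at ht
      rw [hPeq t ht.1]
      exact hinit t ht
    have hcg : (∫ t in (0:ℝ)..1, P t) = ∫ _t in (0:ℝ)..1, (1:ℝ) :=
      intervalIntegral.integral_congr hall
    show (∫ t in (0:ℝ)..1, P t) = 1
    rw [hcg]
    simp
  have hΦ0 : Φ (1 - 1) = 0 := by
    show (∫ t in (0:ℝ)..(1-1), P t) = 0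
    norm_num
  have hG1val : G 1 = 0 := by
    show 1 * ρ 1 - (Φ 1 - Φ (1 - 1)) = 0
    rw [hΦ01, hΦ0, hinit 1 ⟨by norm_num, le_refl 1⟩]
    ring
  -- So c * ρ c = Φ c - Φ (c - 1) = ∫_{c-1}^c P
  have hGc : c * ρ c = Φ c - Φ (c - 1) := by
    have hGc0 : G c = 0 := hG1.trans hG1val
    have : c * ρ c - (Φ c - Φ (c - 1)) = 0 := hGc0
    linarith
  have hint_eq : Φ c - Φ (c - 1) = ∫ t in (c-1)..c, P t := by
    exact intervalIntegral.integral_interval_sub_left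
      (hPcont.intervalIntegrable 0 c) (hPcont.intervalIntegrable 0 (c-1))
  -- But the integral is positive
  have hintpos : 0 < ∫ t in (c-1)..c, P t := by
    apply intervalIntegral.intervalIntegral_pos_of_pos_on
      (hPcont.intervalIntegrable (c-1) c)
    · intro x hx
      rw [hPeq x (by linarith [hx.1] : (0:ℝ) ≤ x)]
      exact hpos x (by linarith [hx.1]) hx.2
    · linarith
  have : c * ρ c ≤ 0 := mul_nonpos_of_nonneg_of_nonpos hc0 hρc
  rw [hGc, hint_eq] at this
  linarith
end

section
/- Assume Dickman's theorem: Ψ(x, x^{1/u})/x → ρ(u) uniformly for u in compact subsets of (0,∞). Fix k ≥ 1, ε ∈ (0,1), and a closed box B = ∏[t_i, t_i+Δt_i] ⊂ U = {t_1 > ... > t_k > 0, ∑t_i < 1} with (k/(2ε))·diam(B) < d(B,U^c). Let N be uniform on {1,...,n} and X_n = (log_n P_1(N),...,log_n P_k(N)). Then liminf_{n→∞} P(X_n ∈ B) ≥ (1−ε)·∏_{i=1}^k (Δt_i/t_i) · ρ((1−∑t_i)/t_k). -/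
open Filter Set Finset

/-- `Pfac i m` is the `(i+1)`-st largest prime factor of `m`, counted with
multiplicity, with value `1` if `m` has at most `i` prime factors. -/
def Pfac (i m : ℕ) : ℕ := (m.primeFactorsList.reverse).getD i 1

/-- `Psi x y` counts the positive integers `≤ x` all of whose prime factors are `≤ y`. -/
noncomputable def Psi (x y : ℝ) : ℕ :=
  {m : ℕ | 1 ≤ m ∧ (m : ℝ) ≤ x ∧ ∀ p : ℕ, p.Prime → p ∣ m → (p : ℝ) ≤ y}.ncard

/-- Distance between two subsets of a metric space. -/
noncomputable def setDist {E : Type*} [PseudoMetricSpace E] (A B : Set E) : ℝ :=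
  sInf (Set.image2 dist A B)

lemma aux_log_lb {r : ℝ} (hr : 0 ≤ r) : r - r^2/2 ≤ Real.log (1+r) := by
  set f : ℝ → ℝ := fun x => Real.log (1+x) - x + x^2/2 with hf
  have hder : ∀ x ∈ interior (Ici (0:ℝ)), 0 ≤ deriv f x := by
    intro x hx
    rw [interior_Ici] at hx
    have hx0 : (0:ℝ) < x := hx
    have h1 : (0:ℝ) < 1 + x := by linarith
    have hd : HasDerivAt f ((1+x)⁻¹ - 1 + x) x := by
      have hlog : HasDerivAt (fun y : ℝ => Real.log (1+y)) ((1+x)⁻¹) x := by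
        have := ((Real.hasDerivAt_log h1.ne').comp x
          (((hasDerivAt_id x).const_add 1)))
        simpa [Function.comp_def] using this
      have hsq : HasDerivAt (fun y : ℝ => y^2/2) x x := by
        have := ((hasDerivAt_pow 2 x).div_const 2)
        simpa using this
      exact (hlog.sub (hasDerivAt_id x)).add hsq
    rw [hd.deriv]
    rw [inv_eq_one_div]
    have : (1:ℝ)/(1+x) - 1 + x = x^2/(1+x) := by field_simp; ring
    rw [this]
    positivity
  have hcont : ContinuousOn f (Ici 0) := by
    apply ContinuousOn.add
    apply ContinuousOn.sub
    · apply ContinuousOn.log (by fun_prop)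
      intro x hx; have : (0:ℝ) ≤ x := hx; intro h; linarith
    · fun_prop
    · fun_prop
  have hmono : MonotoneOn f (Ici 0) :=
    monotoneOn_of_deriv_nonneg (convex_Ici 0) hcont (fun x hx => by
      have := hder x hx
      rw [interior_Ici] at hx
      have h1 : (0:ℝ) < 1 + x := by linarith [(show (0:ℝ) < x from hx).le]
      exact (((Real.differentiableAt_log h1.ne').comp x (by fun_prop)).sub
        (differentiable_id.differentiableAt)).add (by fun_prop) |>.differentiableWithinAt) hder
  have h0 : f 0 ≤ f r := hmono (by simp) (by simpa using hr) hr
  simp only [hf] at h0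
  norm_num at h0
  linarith

lemma aux_prod_one_sub {k : ℕ} (f : Fin k → ℝ) (h0 : ∀ i, 0 ≤ f i) (h1 : ∀ i, f i ≤ 1) :
    1 - ∑ i, f i ≤ ∏ i, (1 - f i) := by
  classical
  have : ∀ s : Finset (Fin k), 1 - ∑ i ∈ s, f i ≤ ∏ i ∈ s, (1 - f i) := by
    intro s
    induction s using Finset.cons_induction with
    | empty => simp
    | cons a s ha ih =>
      rw [Finset.sum_cons, Finset.prod_cons]
      have hs0 : ∑ i ∈ s, f i ≥ 0 := Finset.sum_nonneg fun i _ => h0 i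
      have hfa := h0 a
      have hfa1 := h1 a
      nlinarith [ih]
  simpa using this Finset.univ

lemma aux_rpow_sum {x : ℝ} (hx : 0 < x) {ι : Type*} (s : Finset ι) (f : ι → ℝ) :
    x ^ (∑ i ∈ s, f i) = ∏ i ∈ s, x ^ f i := by
  classical
  induction s using Finset.cons_induction with
  | empty => simp
  | cons a s ha ih => rw [Finset.sum_cons, Finset.prod_cons, Real.rpow_add hx, ih]

lemma aux_pfac {k : ℕ} (p : Fin k → ℕ) (hp : ∀ i, (p i).Prime)
    (hdec : ∀ i j : Fin k, i < j → p j < p i) (s : ℕ) (hs : s ≠ 0)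
    (hsmall : ∀ q ∈ s.primeFactorsList, ∀ i, q < p i) (i : Fin k) :
    Pfac i (s * ∏ j, p j) = p i := by
  classical
  set L : List ℕ := s.primeFactorsList ++ (List.ofFn p).reverse with hL
  have hprod : L.prod = s * ∏ j, p j := by
    rw [hL, List.prod_append, List.prod_reverse, List.prod_ofFn,
      Nat.prod_primeFactorsList hs]
  have hprime : ∀ q ∈ L, q.Prime := by
    intro q hq
    rcases List.mem_append.1 hq with h | h
    · exact Nat.prime_of_mem_primeFactorsList h
    · rw [List.mem_reverse, List.mem_ofFn] at h
      obtain ⟨j, rfl⟩ := h; exact hp j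
  have hperm : L.Perm (s * ∏ j, p j).primeFactorsList :=
    Nat.primeFactorsList_unique hprod hprime
  have hsorted : L.Pairwise (· ≤ ·) := by
    rw [hL, List.pairwise_append]
    refine ⟨(Nat.primeFactorsList_sorted s).pairwise, ?_, ?_⟩
    · rw [List.pairwise_reverse]
      rw [List.pairwise_ofFn]
      intro a b hab
      exact (hdec a b hab).le
    · intro a ha b hb
      rw [List.mem_reverse, List.mem_ofFn] at hb
      obtain ⟨j, rfl⟩ := hb
      exact (hsmall a ha j).le
  have hEq : L = (s * ∏ j, p j).primeFactorsList :=
    List.Perm.eq_of_sortedLE (List.sortedLE_iff_pairwise.2 hsorted) (Nat.primeFactorsList_sorted _) hperm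
  have hrev : (s * ∏ j, p j).primeFactorsList.reverse
      = List.ofFn p ++ s.primeFactorsList.reverse := by
    rw [← hEq, hL, List.reverse_append, List.reverse_reverse]
  rw [Pfac, hrev]
  have hlen : (i : ℕ) < (List.ofFn p).length := by simp [i.2]
  rw [List.getD_append _ _ _ _ hlen, List.getD_eq_getElem _ _ hlen]
  simp

lemma aux_mem_sdiff {x y : ℝ} (hx : 0 ≤ x) (hy : 0 ≤ y) {q : ℕ}
    (hq : q ∈ ((Finset.range (⌊y⌋₊+1)).filter Nat.Prime) \
      ((Finset.range (⌊x⌋₊+1)).filter Nat.Prime)) :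
    q.Prime ∧ x < q ∧ (q:ℝ) ≤ y := by
  rw [Finset.mem_sdiff, Finset.mem_filter, Finset.mem_range] at hq
  obtain ⟨⟨hlt, hpr⟩, hnot⟩ := hq
  refine ⟨hpr, ?_, ?_⟩
  · have h1 : ¬ q < ⌊x⌋₊ + 1 := fun h => hnot (by
      rw [Finset.mem_filter, Finset.mem_range]; exact ⟨h, hpr⟩)
    have hq' : ⌊x⌋₊ + 1 ≤ q := by omega
    calc x < ⌊x⌋₊ + 1 := Nat.lt_floor_add_one _
      _ ≤ q := by exact_mod_cast hq'
  · have : q ≤ ⌊y⌋₊ := by omega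
    exact le_trans (by exact_mod_cast this) (Nat.floor_le hy)

lemma aux_psi_card (x y : ℝ) (hx : 0 ≤ x) :
    ((Finset.Icc 1 ⌊x⌋₊).filter
      (fun s => ∀ q : ℕ, q ∈ s.primeFactorsList → (q:ℝ) ≤ y)).card = Psi x y := by
  classical
  rw [Psi, ← Set.ncard_coe_finset]
  congr 1
  ext m
  simp only [Finset.coe_filter, Finset.mem_Icc, Set.mem_setOf_eq]
  constructor
  · rintro ⟨⟨h1, h2⟩, h3⟩
    refine ⟨h1, (Nat.le_floor_iff hx).1 h2, fun q hq hqd => ?_⟩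
    exact h3 q (((Nat.mem_primeFactorsList (by omega : m ≠ 0)).2 ⟨hq, hqd⟩))
  · rintro ⟨h1, h2, h3⟩
    refine ⟨⟨h1, (Nat.le_floor_iff hx).2 h2⟩, fun q hq => ?_⟩
    have := (Nat.mem_primeFactorsList (by omega : m ≠ 0)).1 hq
    exact h3 q this.1 this.2
lemma aux_count {k : ℕ} (t Δt : Fin k → ℝ) (tl : ℝ) (htl : 0 < tl)
    (hmin : ∀ i, tl ≤ t i) (hΔ : ∀ i, 0 ≤ Δt i)
    (horder : ∀ i j : Fin k, i < j → t j + Δt j < t i)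
    (n : ℕ) (hn : 2 ≤ n) :
    ∑ p ∈ Fintype.piFinset (fun i =>
        ((Finset.range (⌊(n:ℝ)^(t i + Δt i)⌋₊+1)).filter Nat.Prime) \
        ((Finset.range (⌊(n:ℝ)^(t i)⌋₊+1)).filter Nat.Prime)),
      Psi ((n:ℝ) / ∏ i, (p i : ℝ)) ((n:ℝ)^tl)
      ≤ ((Finset.Icc 1 n).filter (fun m => ∀ i : Fin k,
            t i ≤ Real.log (Pfac i m) / Real.log n ∧
            Real.log (Pfac i m) / Real.log n ≤ t i + Δt i)).card := by
  classical
  have hn0 : (0:ℝ) < n := by positivity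
  have hn1 : (1:ℝ) ≤ n := by exact_mod_cast (by omega : 1 ≤ n)
  have hlogn : 0 < Real.log n := Real.log_pos (by exact_mod_cast hn)
  set A : Fin k → Finset ℕ := fun i =>
      ((Finset.range (⌊(n:ℝ)^(t i + Δt i)⌋₊+1)).filter Nat.Prime) \
      ((Finset.range (⌊(n:ℝ)^(t i)⌋₊+1)).filter Nat.Prime) with hA
  have memA : ∀ i : Fin k, ∀ q ∈ A i,
      q.Prime ∧ (n:ℝ)^(t i) < q ∧ (q:ℝ) ≤ (n:ℝ)^(t i + Δt i) := by
    intro i q hq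
    rw [hA, Finset.mem_sdiff, Finset.mem_filter, Finset.mem_range] at hq
    obtain ⟨⟨hlt, hpr⟩, hnot⟩ := hq
    refine ⟨hpr, ?_, ?_⟩
    · have : ¬ q < ⌊(n:ℝ)^(t i)⌋₊ + 1 := fun h => hnot (by
        rw [Finset.mem_filter, Finset.mem_range]; exact ⟨h, hpr⟩)
      have hq' : ⌊(n:ℝ)^(t i)⌋₊ + 1 ≤ q := by omega
      calc (n:ℝ)^(t i) < ⌊(n:ℝ)^(t i)⌋₊ + 1 := Nat.lt_floor_add_one _
        _ ≤ q := by exact_mod_cast hq'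
    · have : q ≤ ⌊(n:ℝ)^(t i + Δt i)⌋₊ := by omega
      exact le_trans (by exact_mod_cast this) (Nat.floor_le (by positivity))
  -- facts about tuples
  have htup : ∀ p ∈ Fintype.piFinset A,
      (∀ i, (p i).Prime) ∧ (∀ i j : Fin k, i < j → p j < p i) ∧
      (0:ℝ) < ∏ i, (p i : ℝ) := by
    intro p hp
    rw [Fintype.mem_piFinset] at hp
    have h1 : ∀ i, (p i).Prime := fun i => (memA i _ (hp i)).1
    refine ⟨h1, ?_, ?_⟩
    · intro i j hij
      have hji : ((p j):ℝ) < p i := by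
        calc ((p j):ℝ) ≤ (n:ℝ)^(t j + Δt j) := (memA j _ (hp j)).2.2
          _ ≤ (n:ℝ)^(t i) := Real.rpow_le_rpow_of_exponent_le hn1 (horder i j hij).le
          _ < p i := (memA i _ (hp i)).2.1
      exact_mod_cast hji
    · apply Finset.prod_pos
      intro i _
      exact_mod_cast (h1 i).pos
  -- the injection
  set T := (Fintype.piFinset A).sigma
      (fun p => (Finset.Icc 1 ⌊(n:ℝ) / ∏ i, (p i : ℝ)⌋₊).filter
        (fun s => ∀ q : ℕ, q ∈ s.primeFactorsList → (q:ℝ) ≤ (n:ℝ)^tl)) with hT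
  have hTcard : T.card = ∑ p ∈ Fintype.piFinset A,
      Psi ((n:ℝ) / ∏ i, (p i : ℝ)) ((n:ℝ)^tl) := by
    rw [hT, Finset.card_sigma]
    refine Finset.sum_congr rfl fun p hp => ?_
    exact aux_psi_card _ _ (by positivity)
  rw [← hTcard]
  apply Finset.card_le_card_of_injOn (fun q => q.2 * ∏ i, q.1 i)
  · -- maps into the target
    rintro ⟨p, s⟩ hq
    rw [hT, Finset.mem_coe, Finset.mem_sigma, Finset.mem_filter, Finset.mem_Icc] at hq
    obtain ⟨hp, ⟨hs1, hs2⟩, hsm⟩ := hq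
    dsimp only at hp hs1 hs2 hsm
    obtain ⟨hpr, hdec, hprod⟩ := htup p hp
    rw [Fintype.mem_piFinset] at hp
    have hs0 : s ≠ 0 := Nat.one_le_iff_ne_zero.mp hs1
    have hsmall : ∀ q ∈ s.primeFactorsList, ∀ i, q < p i := by
      intro q hq i
      have h1 : (q:ℝ) ≤ (n:ℝ)^tl := hsm q hq
      have h2 : (n:ℝ)^tl ≤ (n:ℝ)^(t i) := Real.rpow_le_rpow_of_exponent_le hn1 (hmin i)
      have h3 : (q:ℝ) < p i := lt_of_le_of_lt (h1.trans h2) (memA i _ (hp i)).2.1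
      exact_mod_cast h3
    have hpf : ∀ i : Fin k, Pfac i (s * ∏ j, p j) = p i := aux_pfac p hpr hdec s hs0 hsmall
    simp only [Finset.mem_coe, Finset.mem_filter, Finset.mem_Icc]
    constructor
    · constructor
      · have := Finset.prod_pos (fun i (_ : i ∈ Finset.univ) => (hpr i).pos)
        exact Nat.one_le_iff_ne_zero.2 (by positivity)
      · -- s * ∏ p ≤ n
        have hle : ((s * ∏ j, p j : ℕ) : ℝ) ≤ n := by
          push_cast
          have h1 : (s:ℝ) ≤ ⌊(n:ℝ) / ∏ i, (p i : ℝ)⌋₊ := by exact_mod_cast hs2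
          have h2 : (⌊(n:ℝ) / ∏ i, (p i : ℝ)⌋₊ : ℝ) ≤ (n:ℝ) / ∏ i, (p i : ℝ) :=
            Nat.floor_le (by positivity)
          calc (s:ℝ) * ∏ j, (p j:ℝ) ≤ ((n:ℝ) / ∏ i, (p i : ℝ)) * ∏ j, (p j:ℝ) := by
                apply mul_le_mul_of_nonneg_right (h1.trans h2) hprod.le
            _ = n := by field_simp
        exact_mod_cast hle
    · intro i
      rw [hpf i]
      have hmem := memA i _ (hp i)
      have hppos : (0:ℝ) < p i := by exact_mod_cast (hpr i).pos
      constructor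
      · rw [le_div_iff₀ hlogn]
        calc t i * Real.log n = Real.log ((n:ℝ)^(t i)) := (Real.log_rpow hn0 _).symm
          _ ≤ Real.log (p i) := Real.log_le_log (by positivity) hmem.2.1.le
      · rw [div_le_iff₀ hlogn]
        calc Real.log (p i) ≤ Real.log ((n:ℝ)^(t i + Δt i)) :=
              Real.log_le_log hppos hmem.2.2
          _ = (t i + Δt i) * Real.log n := Real.log_rpow hn0 _
  · -- injective
    rintro ⟨p, s⟩ hq ⟨p', s'⟩ hq' heq
    simp only [hT, Finset.coe_sigma, Set.mem_sigma_iff, Finset.mem_coe,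
      Finset.mem_filter, Finset.mem_Icc] at hq hq'
    obtain ⟨hp, ⟨hs1, hs2⟩, hsm⟩ := hq
    obtain ⟨hp', ⟨hs1', hs2'⟩, hsm'⟩ := hq'
    obtain ⟨hpr, hdec, hprod⟩ := htup p hp
    obtain ⟨hpr', hdec', hprod'⟩ := htup p' hp'
    rw [Fintype.mem_piFinset] at hp hp'
    have hsmall : ∀ q ∈ s.primeFactorsList, ∀ i, q < p i := by
      intro q hq i
      have h3 : (q:ℝ) < p i := lt_of_le_of_lt ((hsm q hq).trans
        (Real.rpow_le_rpow_of_exponent_le hn1 (hmin i))) (memA i _ (hp i)).2.1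
      exact_mod_cast h3
    have hsmall' : ∀ q ∈ s'.primeFactorsList, ∀ i, q < p' i := by
      intro q hq i
      have h3 : (q:ℝ) < p' i := lt_of_le_of_lt ((hsm' q hq).trans
        (Real.rpow_le_rpow_of_exponent_le hn1 (hmin i))) (memA i _ (hp' i)).2.1
      exact_mod_cast h3
    have hpf := aux_pfac p hpr hdec s (Nat.one_le_iff_ne_zero.mp hs1) hsmall
    have hpf' := aux_pfac p' hpr' hdec' s' (Nat.one_le_iff_ne_zero.mp hs1') hsmall'
    simp only at heq
    have hpp : p = p' := by
      funext i
      rw [← hpf i, ← hpf' i, heq]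
    subst hpp
    have hss : s = s' := by
      have hne : 0 < (∏ j, p j) := Finset.prod_pos fun i _ => (hpr i).pos
      have : s * ∏ j, p j = s' * ∏ j, p j := heq
      exact Nat.eq_of_mul_eq_mul_right hne this
    simp [hss]
set_option maxHeartbeats 1000000 in
open Classical in
theorem box_liminf_lower_bound (k : ℕ) (hk : 0 < k)
    (ρ : ℝ → ℝ) (hρcont : ContinuousOn ρ (Ici 0))
    (hρpos : ∀ u : ℝ, 0 ≤ u → 0 < ρ u) (hρanti : AntitoneOn ρ (Ici 0))
    (dickman : ∀ K : Set ℝ, K ⊆ Ioi 0 → IsCompact K →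
      TendstoUniformlyOn (fun (x : ℝ) (u : ℝ) => (Psi x (x ^ (1 / u)) : ℝ) / x)
        ρ atTop K)
    (c₀ : ℝ)
    (mertens : Tendsto (fun x : ℝ =>
        (∑ p ∈ (Finset.range (⌊x⌋₊ + 1)).filter Nat.Prime, (1 : ℝ) / p)
          - c₀ - Real.log (Real.log x)) atTop (nhds 0))
    (ε : ℝ) (hε0 : 0 < ε) (hε1 : ε < 1)
    (t Δt : Fin k → ℝ) (hΔt : ∀ i, 0 ≤ Δt i)
    (U : Set (Fin k → ℝ))
    (hU : U = {x | (∀ i j : Fin k, i < j → x j < x i) ∧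
        0 < x ⟨k - 1, Nat.sub_lt hk one_pos⟩ ∧ (∑ i, x i) < 1})
    (B : Set (Fin k → ℝ)) (hB : B = univ.pi fun i => Icc (t i) (t i + Δt i))
    (hBU : B ⊆ U)
    (hsep : (k / (2 * ε)) * Metric.diam B < setDist B Uᶜ) :
    (1 - ε) * (∏ i, Δt i / t i)
        * ρ ((1 - ∑ i, t i) / t ⟨k - 1, Nat.sub_lt hk one_pos⟩) ≤
      atTop.liminf (fun n : ℕ =>
        (((Finset.Icc 1 n).filter (fun m => ∀ i : Fin k,
            t i ≤ Real.log (Pfac i m) / Real.log n ∧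
            Real.log (Pfac i m) / Real.log n ≤ t i + Δt i)).card : ℝ) / n) := by
  classical
  set last : Fin k := ⟨k - 1, Nat.sub_lt hk one_pos⟩ with hlast
  set a : ℕ → ℝ := fun n =>
        (((Finset.Icc 1 n).filter (fun m => ∀ i : Fin k,
            t i ≤ Real.log (Pfac i m) / Real.log n ∧
            Real.log (Pfac i m) / Real.log n ≤ t i + Δt i)).card : ℝ) / n with ha
  -- basic facts about the box
  have hle_last : ∀ i : Fin k, i ≤ last := by
    intro i
    have := i.2
    rw [Fin.le_def]
    simp only [hlast]
    omega
  have htB : t ∈ B := by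
    rw [hB]; intro i _; exact ⟨le_refl _, le_add_of_nonneg_right (hΔt i)⟩
  have hbB : (fun i => t i + Δt i) ∈ B := by
    rw [hB]; intro i _; exact ⟨le_add_of_nonneg_right (hΔt i), le_refl _⟩
  have htU := hBU htB
  rw [hU] at htU
  obtain ⟨htdec, htlast, htsum⟩ := htU
  have hbU := hBU hbB
  rw [hU] at hbU
  have hbsum : (∑ i, (t i + Δt i)) < 1 := hbU.2.2
  have htpos : ∀ i, 0 < t i := by
    intro i
    rcases eq_or_lt_of_le (hle_last i) with h | h
    · rwa [← h] at htlast
    · exact lt_trans htlast (htdec i last h)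
  have htlast_le : ∀ i, t last ≤ t i := by
    intro i
    rcases eq_or_lt_of_le (hle_last i) with h | h
    · rw [← h]
    · exact (htdec i last h).le
  have horder : ∀ i j : Fin k, i < j → t j + Δt j < t i := by
    intro i j hij
    have hx : Function.update t j (t j + Δt j) ∈ B := by
      rw [hB]; intro m _
      rcases eq_or_ne m j with rfl | hm
      · rw [Function.update_self]
        exact ⟨le_add_of_nonneg_right (hΔt m), le_refl _⟩
      · rw [Function.update_of_ne hm]
        exact ⟨le_refl _, le_add_of_nonneg_right (hΔt m)⟩
    have hxU := hBU hx
    rw [hU] at hxU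
    have := hxU.1 i j hij
    rwa [Function.update_self, Function.update_of_ne (Fin.ne_of_lt hij)] at this
  -- separation consequences
  have hBbd : Bornology.IsBounded B := by
    rw [hB]; exact Bornology.IsBounded.pi (fun i => Metric.isBounded_Icc _ _)
  have hdiam : ∀ i, Δt i ≤ Metric.diam B := by
    intro i
    have h1 : dist ((fun j => t j + Δt j) : Fin k → ℝ) t ≤ Metric.diam B :=
      Metric.dist_le_diam_of_mem hBbd hbB htB
    have h2 : dist (t i + Δt i) (t i) ≤ dist ((fun j => t j + Δt j) : Fin k → ℝ) t :=
      dist_le_pi_dist (X := fun _ : Fin k => ℝ) (fun j => t j + Δt j) t i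
    have h3 : dist (t i + Δt i) (t i) = Δt i := by
      rw [Real.dist_eq]
      rw [add_sub_cancel_left, abs_of_nonneg (hΔt i)]
    linarith
  have hdistU : setDist B Uᶜ ≤ t last := by
    set y : Fin k → ℝ := Function.update t last 0 with hy
    have hyU : y ∈ Uᶜ := by
      intro h
      rw [hU] at h
      have h2 := h.2.1
      simp only [hy, Function.update_self] at h2
      exact lt_irrefl _ h2
    have hdist : dist t y ≤ t last := by
      rw [dist_pi_le_iff htlast.le]
      intro b
      rcases eq_or_ne b last with rfl | hb
      · rw [hy]
        simp [Real.dist_eq, abs_of_nonneg htlast.le]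
      · rw [hy, Function.update_of_ne hb]
        simp [htlast.le]
    have hbdd : BddBelow (Set.image2 dist B Uᶜ) := by
      refine ⟨0, fun d hd => ?_⟩
      obtain ⟨u, _, v, _, rfl⟩ := hd
      exact dist_nonneg
    have hmem : dist t y ∈ Set.image2 dist B Uᶜ := Set.mem_image2_of_mem htB hyU
    exact le_trans (csInf_le hbdd hmem) hdist
  have hk0 : (0:ℝ) < k := by exact_mod_cast hk
  have hrb : ∀ i, Δt i < 2 * ε / k * t i := by
    intro i
    have h1 : (k / (2 * ε)) * Δt i ≤ (k / (2 * ε)) * Metric.diam B :=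
      mul_le_mul_of_nonneg_left (hdiam i) (by positivity)
    have h2 : (k / (2 * ε)) * Δt i < t i := lt_of_le_of_lt h1
      (lt_of_lt_of_le hsep (hdistU.trans (htlast_le i)))
    have h2' : (k:ℝ) * Δt i < 2 * ε * t i := by
      rw [div_mul_eq_mul_div, div_lt_iff₀ (by positivity : (0:ℝ) < 2 * ε)] at h2
      linarith
    rw [div_mul_eq_mul_div, lt_div_iff₀ hk0]
    linarith
  -- notation
  set r : Fin k → ℝ := fun i => Δt i / t i with hrdef
  set ℓ : Fin k → ℝ := fun i => Real.log ((t i + Δt i) / t i) with hldef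
  have hr0 : ∀ i, 0 ≤ r i := fun i => div_nonneg (hΔt i) (htpos i).le
  have hri : ∀ i, r i = Δt i / t i := fun i => rfl
  have hℓi : ∀ i, ℓ i = Real.log ((t i + Δt i) / t i) := fun i => rfl
  have hrlt : ∀ i, r i < 2 * ε / k := by
    intro i
    rw [hri, div_lt_iff₀ (htpos i)]
    have := hrb i
    nlinarith
  have hrsmall : ∀ i, r i < 2 * ε := by
    intro i
    have hk1 : (1:ℝ) ≤ k := by exact_mod_cast hk
    calc r i < 2 * ε / k := hrlt i
      _ ≤ 2 * ε := by
        rw [div_le_iff₀ hk0]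
        nlinarith
  have hleq : ∀ i, ℓ i = Real.log (1 + r i) := by
    intro i
    rw [hℓi, hri]
    congr 1
    have := (htpos i).ne'
    field_simp
  have hl_lb : ∀ i, r i * (1 - r i / 2) ≤ ℓ i := by
    intro i
    rw [hleq i]
    have := aux_log_lb (hr0 i)
    nlinarith
  have hl0 : ∀ i, 0 ≤ ℓ i := by
    intro i
    rw [hleq i]
    apply Real.log_nonneg
    linarith [hr0 i]
  set uhi : ℝ := (1 - ∑ i, t i) / t last with huhi
  set ulo : ℝ := (1 - ∑ i, (t i + Δt i)) / t last with hulo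
  have hulo0 : 0 < ulo := div_pos (by linarith) htlast
  have hlohi : ulo ≤ uhi := by
    rw [hulo, huhi]
    have hsum_le : ∑ i, t i ≤ ∑ i, (t i + Δt i) :=
      Finset.sum_le_sum (fun i _ => le_add_of_nonneg_right (hΔt i))
    gcongr
  have huhi0 : 0 < uhi := lt_of_lt_of_le hulo0 hlohi
  set ρstar : ℝ := ρ uhi with hρstar
  have hρstar0 : 0 < ρstar := hρpos uhi huhi0.le
  -- algebraic reduction
  have halg : (1 - ε) * (∏ i, r i) ≤ ∏ i, ℓ i := by
    have h1 : ∏ i, (r i * (1 - r i / 2)) ≤ ∏ i, ℓ i :=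
      Finset.prod_le_prod (fun i _ => mul_nonneg (hr0 i) (by nlinarith [hrsmall i]))
        (fun i _ => hl_lb i)
    have h2 : ∏ i, (r i * (1 - r i / 2)) = (∏ i, r i) * ∏ i, (1 - r i / 2) :=
      Finset.prod_mul_distrib
    have h3 : 1 - ∑ i, (r i / 2) ≤ ∏ i, (1 - r i / 2) :=
      aux_prod_one_sub (fun i => r i / 2) (fun i => by linarith [hr0 i])
        (fun i => by nlinarith [hrsmall i])
    have h4 : ∑ i, (r i / 2) ≤ ε := by
      have : ∑ i, (r i / 2) ≤ ∑ _i : Fin k, (ε / k) :=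
        Finset.sum_le_sum (fun i _ => by
          have h5 : r i * k < 2 * ε := (lt_div_iff₀ hk0).1 (hrlt i)
          rw [div_le_div_iff₀ (by norm_num : (0:ℝ) < 2) hk0]
          linarith)
      calc ∑ i, (r i / 2) ≤ ∑ _i : Fin k, (ε / k) := this
        _ = k * (ε / k) := by
          rw [Finset.sum_const, Finset.card_univ, Fintype.card_fin, nsmul_eq_mul]
        _ = ε := by field_simp
    have hprodr0 : 0 ≤ ∏ i, r i := Finset.prod_nonneg (fun i _ => hr0 i)
    calc (1 - ε) * (∏ i, r i) ≤ (1 - ∑ i, (r i / 2)) * (∏ i, r i) := by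
          apply mul_le_mul_of_nonneg_right _ hprodr0
          linarith
      _ ≤ (∏ i, (1 - r i / 2)) * (∏ i, r i) := mul_le_mul_of_nonneg_right h3 hprodr0
      _ = ∏ i, (r i * (1 - r i / 2)) := by rw [h2]; ring
      _ ≤ ∏ i, ℓ i := h1
  -- boundedness / coboundedness of the sequence
  have habound : ∀ n, a n ≤ 1 := by
    intro n
    rw [ha]
    simp only
    rcases Nat.eq_zero_or_pos n with rfl | hn
    · simp
    · have hcard : ((Finset.Icc 1 n).filter (fun m => ∀ i : Fin k,
            t i ≤ Real.log (Pfac i m) / Real.log n ∧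
            Real.log (Pfac i m) / Real.log n ≤ t i + Δt i)).card ≤ n := by
        calc ((Finset.Icc 1 n).filter _).card ≤ (Finset.Icc 1 n).card :=
              Finset.card_filter_le _ _
          _ = n := by rw [Nat.card_Icc]; omega
      rw [div_le_one (by exact_mod_cast hn)]
      exact_mod_cast hcard
  have hcobdd : IsCoboundedUnder (· ≥ ·) atTop a := by
    have hbdd : IsBoundedUnder (· ≤ ·) atTop a :=
      isBoundedUnder_of ⟨1, fun n => habound n⟩
    exact hbdd.isCoboundedUnder_ge
  -- main step with a δ margin
  have hstep : ∀ δ : ℝ, 0 < δ → δ < ρstar →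
      (ρstar - δ) * ∏ i, ℓ i ≤ atTop.liminf a := by
    intro δ hδ0 hδρ
    -- Mertens limits
    set S : ℝ → ℝ := fun x =>
      ∑ p ∈ (Finset.range (⌊x⌋₊ + 1)).filter Nat.Prime, (1:ℝ)/p with hS
    set A : ℕ → Fin k → Finset ℕ := fun n i =>
        ((Finset.range (⌊(n:ℝ)^(t i + Δt i)⌋₊+1)).filter Nat.Prime) \
        ((Finset.range (⌊(n:ℝ)^(t i)⌋₊+1)).filter Nat.Prime) with hA
    set σ : Fin k → ℕ → ℝ := fun i n => ∑ q ∈ A n i, ((q:ℝ))⁻¹ with hσ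
    have hAsub : ∀ n : ℕ, 2 ≤ n → ∀ i : Fin k,
        ((Finset.range (⌊(n:ℝ)^(t i)⌋₊+1)).filter Nat.Prime) ⊆
        ((Finset.range (⌊(n:ℝ)^(t i + Δt i)⌋₊+1)).filter Nat.Prime) := by
      intro n hn i
      apply Finset.filter_subset_filter
      apply Finset.range_subset_range.2
      have h1 : (n:ℝ)^(t i) ≤ (n:ℝ)^(t i + Δt i) :=
        Real.rpow_le_rpow_of_exponent_le (by exact_mod_cast (by omega : 1 ≤ n))
          (by linarith [hΔt i])
      have := Nat.floor_mono h1
      omega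
    have hσtend : ∀ i, Tendsto (fun n : ℕ => σ i n) atTop (nhds (ℓ i)) := by
      intro i
      have hbpos : 0 < t i + Δt i := by linarith [htpos i, hΔt i]
      have h1 : Tendsto (fun n : ℕ => ((n:ℝ))^(t i + Δt i)) atTop atTop :=
        (tendsto_rpow_atTop hbpos).comp tendsto_natCast_atTop_atTop
      have h2 : Tendsto (fun n : ℕ => ((n:ℝ))^(t i)) atTop atTop :=
        (tendsto_rpow_atTop (htpos i)).comp tendsto_natCast_atTop_atTop
      have hg1 := mertens.comp h1
      have hg2 := mertens.comp h2
      have hgl : Tendsto (fun n : ℕ =>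
          ((S ((n:ℝ)^(t i + Δt i)) - c₀ - Real.log (Real.log ((n:ℝ)^(t i + Δt i))))
          - (S ((n:ℝ)^(t i)) - c₀ - Real.log (Real.log ((n:ℝ)^(t i))))
          + (Real.log (t i + Δt i) - Real.log (t i)))) atTop
          (nhds (ℓ i)) := by
        have h3 := (hg1.sub hg2).add_const (Real.log (t i + Δt i) - Real.log (t i))
        have h4 : ℓ i = 0 - 0 + (Real.log (t i + Δt i) - Real.log (t i)) := by
          rw [hℓi, Real.log_div hbpos.ne' (htpos i).ne']
          ring
        rw [h4]
        exact h3
      apply hgl.congr'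
      filter_upwards [eventually_ge_atTop 2] with n hn
      have hn1 : (1:ℝ) < n := by exact_mod_cast (by omega : 1 < n)
      have hn0' : (0:ℝ) < n := by linarith
      have hlogn : 0 < Real.log n := Real.log_pos hn1
      have hbpos2 : 0 < t i + Δt i := hbpos
      have e1 : Real.log (Real.log ((n:ℝ)^(t i + Δt i)))
          = Real.log (t i + Δt i) + Real.log (Real.log n) := by
        rw [Real.log_rpow hn0', Real.log_mul hbpos.ne' hlogn.ne']
      have e2 : Real.log (Real.log ((n:ℝ)^(t i)))
          = Real.log (t i) + Real.log (Real.log n) := by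
        rw [Real.log_rpow hn0', Real.log_mul (htpos i).ne' hlogn.ne']
      have e3 : σ i n = S ((n:ℝ)^(t i + Δt i)) - S ((n:ℝ)^(t i)) := by
        rw [hσ, hS]
        simp only [one_div]
        exact Finset.sum_sdiff_eq_sub (hAsub n hn i)
      rw [e3, e1, e2]
      ring
    have hσ0 : ∀ i n, 0 ≤ σ i n := by
      intro i n
      rw [hσ]
      exact Finset.sum_nonneg (fun q _ => by positivity)
    have hprodσ : Tendsto (fun n => ∏ i, σ i n) atTop (nhds (∏ i, ℓ i)) :=
      tendsto_finset_prod _ (fun i _ => hσtend i)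
    -- Dickman uniform bound
    set K : Set ℝ := Icc ulo uhi with hK
    have hdk := dickman K (fun x hx => lt_of_lt_of_le hulo0 hx.1) isCompact_Icc
    rw [Metric.tendstoUniformlyOn_iff] at hdk
    obtain ⟨X, hX⟩ := (eventually_atTop).1 (hdk δ hδ0)
    set c : ℝ := 1 - ∑ i, (t i + Δt i) with hc
    have hc0 : 0 < c := by rw [hc]; linarith
    have hctend : Tendsto (fun n : ℕ => ((n:ℝ))^c) atTop atTop :=
      (tendsto_rpow_atTop hc0).comp tendsto_natCast_atTop_atTop
    have hcount : ∀ᶠ n : ℕ in atTop, (ρstar - δ) * ∏ i, σ i n ≤ a n := by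
      filter_upwards [eventually_ge_atTop 2,
        hctend.eventually_ge_atTop (max X 2)] with n hn2 hnc
      have hn0' : (0:ℝ) < n := by exact_mod_cast (by omega : 0 < n)
      have hn1 : (1:ℝ) < n := by exact_mod_cast (by omega : 1 < n)
      have hlogn : 0 < Real.log n := Real.log_pos hn1
      have key := aux_count t Δt (t last) htlast htlast_le hΔt horder n hn2
      -- per-tuple lower bound
      have hper : ∀ p ∈ Fintype.piFinset (A n),
          (ρstar - δ) * ((n:ℝ) * ∏ i, ((p i:ℝ))⁻¹)
            ≤ (Psi ((n:ℝ) / ∏ i, (p i:ℝ)) ((n:ℝ)^(t last)) : ℝ) := by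
        intro p hp
        rw [Fintype.mem_piFinset] at hp
        have hmem : ∀ i, (p i).Prime ∧ (n:ℝ)^(t i) < p i ∧
            (p i:ℝ) ≤ (n:ℝ)^(t i + Δt i) := by
          intro i
          have := hp i
          rw [hA] at this
          exact aux_mem_sdiff (by positivity) (by positivity) this
        have hppos : ∀ i, (0:ℝ) < p i :=
          fun i => lt_trans (by positivity) (hmem i).2.1
        have hprodpos : (0:ℝ) < ∏ i, (p i:ℝ) :=
          Finset.prod_pos (fun i _ => hppos i)
        set x : ℝ := (n:ℝ) / ∏ i, (p i:ℝ) with hx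
        have hxpos : 0 < x := by rw [hx]; positivity
        have hprodle : ∏ i, (p i:ℝ) ≤ (n:ℝ)^(∑ i, (t i + Δt i)) := by
          rw [aux_rpow_sum hn0']
          exact Finset.prod_le_prod (fun i _ => (hppos i).le) (fun i _ => (hmem i).2.2)
        have hxge : (n:ℝ)^c ≤ x := by
          rw [hx, hc, Real.rpow_sub hn0', Real.rpow_one]
          gcongr
        have hxX : X ≤ x := le_trans (le_trans (le_max_left _ _) hnc) hxge
        have hx2 : (2:ℝ) ≤ x := le_trans (le_trans (le_max_right _ _) hnc) hxge
        have hlogx : 0 < Real.log x := Real.log_pos (by linarith)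
        set u : ℝ := Real.log x / (t last * Real.log n) with hu
        have hu0 : 0 < u := div_pos hlogx (by positivity)
        have hlogp : ∀ i, t i * Real.log n ≤ Real.log (p i) ∧
            Real.log (p i) ≤ (t i + Δt i) * Real.log n := by
          intro i
          constructor
          · rw [← Real.log_rpow hn0']
            exact Real.log_le_log (by positivity) (hmem i).2.1.le
          · rw [← Real.log_rpow hn0']
            exact Real.log_le_log (hppos i) (hmem i).2.2
        have hlogprod : Real.log (∏ i, (p i:ℝ)) = ∑ i, Real.log (p i) :=
          Real.log_prod (fun i _ => (hppos i).ne')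
        have hlogx_eq : Real.log x = Real.log n - ∑ i, Real.log (p i) := by
          rw [hx, Real.log_div hn0'.ne' hprodpos.ne', hlogprod]
        have hsum_le : ∑ i, Real.log (p i) ≤ (∑ i, (t i + Δt i)) * Real.log n := by
          rw [Finset.sum_mul]
          exact Finset.sum_le_sum (fun i _ => (hlogp i).2)
        have hsum_ge : (∑ i, t i) * Real.log n ≤ ∑ i, Real.log (p i) := by
          rw [Finset.sum_mul]
          exact Finset.sum_le_sum (fun i _ => (hlogp i).1)
        have h9 : (1 - ∑ i, (t i + Δt i)) * Real.log n ≤ Real.log x := by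
          rw [hlogx_eq]; linarith [hsum_le]
        have h10 : Real.log x ≤ (1 - ∑ i, t i) * Real.log n := by
          rw [hlogx_eq]; linarith [hsum_ge]
        have hu_le : u ≤ uhi := by
          rw [hu, huhi, div_le_div_iff₀ (by positivity) htlast]
          calc Real.log x * t last ≤ ((1 - ∑ i, t i) * Real.log n) * t last :=
                mul_le_mul_of_nonneg_right h10 htlast.le
            _ = (1 - ∑ i, t i) * (t last * Real.log n) := by ring
        have hu_ge : ulo ≤ u := by
          rw [hulo, hu, div_le_div_iff₀ htlast (by positivity)]
          calc (1 - ∑ i, (t i + Δt i)) * (t last * Real.log n)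
              = ((1 - ∑ i, (t i + Δt i)) * Real.log n) * t last := by ring
            _ ≤ Real.log x * t last := mul_le_mul_of_nonneg_right h9 htlast.le
        have huK : u ∈ K := by
          rw [hK]; exact ⟨hu_ge, hu_le⟩
        have hxu : x ^ (1/u) = (n:ℝ)^(t last) := by
          rw [Real.rpow_def_of_pos hxpos, Real.rpow_def_of_pos hn0']
          congr 1
          rw [hu]
          field_simp
        have hdist := hX x hxX u huK
        rw [hxu] at hdist
        have hρu : ρstar ≤ ρ u := hρanti (mem_Ici.2 hu0.le) (mem_Ici.2 huhi0.le) hu_le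
        have hkey : (ρstar - δ) ≤ (Psi x ((n:ℝ)^(t last)) : ℝ)/x := by
          rw [Real.dist_eq] at hdist
          have habs := abs_lt.1 hdist
          linarith [habs.2]
        calc (ρstar - δ) * ((n:ℝ) * ∏ i, ((p i:ℝ))⁻¹) = (ρstar - δ) * x := by
              rw [hx, Finset.prod_inv_distrib]
              ring
          _ ≤ (Psi x ((n:ℝ)^(t last)) : ℝ) := (le_div_iff₀ hxpos).1 hkey
      -- sum up
      have hsum2 : (ρstar - δ) * ((n:ℝ) * ∏ i, σ i n) ≤
          (((Finset.Icc 1 n).filter (fun m => ∀ i : Fin k,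
            t i ≤ Real.log (Pfac i m) / Real.log n ∧
            Real.log (Pfac i m) / Real.log n ≤ t i + Δt i)).card : ℝ) := by
        have h1 : ∑ p ∈ Fintype.piFinset (A n),
            (ρstar - δ) * ((n:ℝ) * ∏ i, ((p i:ℝ))⁻¹)
            ≤ ∑ p ∈ Fintype.piFinset (A n),
              (Psi ((n:ℝ) / ∏ i, (p i:ℝ)) ((n:ℝ)^(t last)) : ℝ) :=
          Finset.sum_le_sum hper
        have h2 : ∑ p ∈ Fintype.piFinset (A n),
            (Psi ((n:ℝ) / ∏ i, (p i:ℝ)) ((n:ℝ)^(t last)) : ℝ)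
            ≤ (((Finset.Icc 1 n).filter (fun m => ∀ i : Fin k,
              t i ≤ Real.log (Pfac i m) / Real.log n ∧
              Real.log (Pfac i m) / Real.log n ≤ t i + Δt i)).card : ℝ) := by
          rw [← Nat.cast_sum]
          exact_mod_cast (by rw [hA]; exact key :
            ∑ p ∈ Fintype.piFinset (A n),
              Psi ((n:ℝ) / ∏ i, (p i:ℝ)) ((n:ℝ)^(t last)) ≤
            ((Finset.Icc 1 n).filter (fun m => ∀ i : Fin k,
              t i ≤ Real.log (Pfac i m) / Real.log n ∧
              Real.log (Pfac i m) / Real.log n ≤ t i + Δt i)).card)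
        have h3 : ∑ p ∈ Fintype.piFinset (A n),
            (ρstar - δ) * ((n:ℝ) * ∏ i, ((p i:ℝ))⁻¹)
            = (ρstar - δ) * ((n:ℝ) * ∏ i, σ i n) := by
          have h4 : ∏ i, σ i n = ∑ p ∈ Fintype.piFinset (A n), ∏ i, ((p i:ℝ))⁻¹ := by
            rw [hσ]
            exact Finset.prod_univ_sum _ _
          rw [h4]
          simp only [Finset.mul_sum]
        linarith
      rw [ha]
      simp only
      rw [le_div_iff₀ hn0']
      nlinarith [hsum2]
    -- pass to the liminf
    apply le_of_forall_pos_le_add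
    intro η hη
    have hmul : Tendsto (fun n => (ρstar - δ) * ∏ i, σ i n) atTop
        (nhds ((ρstar - δ) * ∏ i, ℓ i)) := hprodσ.const_mul _
    have hev2 : ∀ᶠ n : ℕ in atTop,
        (ρstar - δ) * ∏ i, ℓ i - η < (ρstar - δ) * ∏ i, σ i n :=
      hmul.eventually (eventually_gt_nhds (by linarith))
    have hlim : (ρstar - δ) * ∏ i, ℓ i - η ≤ atTop.liminf a :=
      le_liminf_of_le hcobdd (by
        filter_upwards [hcount, hev2] with n h1 h2
        linarith)
    linarith
  -- remove the δ
  have hmain : ρstar * ∏ i, ℓ i ≤ atTop.liminf a := by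
    apply le_of_forall_pos_le_add
    intro η hη
    have hl1 : 0 ≤ ∏ i, ℓ i := Finset.prod_nonneg (fun i _ => hl0 i)
    set δ : ℝ := min (ρstar/2) (η / (∏ i, ℓ i + 1)) with hδ
    have hδ0 : 0 < δ := lt_min (by positivity) (by positivity)
    have hδρ : δ < ρstar := lt_of_le_of_lt (min_le_left _ _) (by linarith)
    have h1 := hstep δ hδ0 hδρ
    have hδl : δ * ∏ i, ℓ i ≤ η := by
      calc δ * ∏ i, ℓ i ≤ (η / (∏ i, ℓ i + 1)) * ∏ i, ℓ i :=
            mul_le_mul_of_nonneg_right (min_le_right _ _) hl1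
        _ ≤ η := by
          rw [div_mul_eq_mul_div, div_le_iff₀ (by linarith)]
          nlinarith
    have heq : (ρstar - δ) * ∏ i, ℓ i = ρstar * ∏ i, ℓ i - δ * ∏ i, ℓ i := by ring
    linarith
  -- finish
  have hfin : (1 - ε) * (∏ i, r i) * ρstar ≤ ρstar * ∏ i, ℓ i := by
    calc (1 - ε) * (∏ i, r i) * ρstar ≤ (∏ i, ℓ i) * ρstar :=
          mul_le_mul_of_nonneg_right halg hρstar0.le
      _ = ρstar * ∏ i, ℓ i := by ring
  exact le_trans hfin hmain
end
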